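/- Let n ∈ ℤ and let f : ℚ_p → ℂ be μ-integrable and locally constant with degree n, i.e. f(x + a) = f(x) for all x ∈ ℚ_p whenever ‖a‖_p ≤ p^{−n}. Then the Fourier transform of f has compact support with degree n: for every y ∈ ℚ_p with ‖y‖_p > p^n, ∫ χ(−x·y)·f(x) dμ(x) = 0. -/

import Mathlib

open MeasureTheory

/-- If `f : ℚ_p → ℂ` is integrable and locally constant with degree `n`
(i.e. `f (x + a) = f x` whenever `‖a‖_p ≤ p^(-n)`), then its Fourier transform has
compact support with degree `n`: it vanishes at every `y` with `‖y‖_p > p^n`.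
Here `χ` is a continuous additive character of `ℚ_p` whose kernel is exactly `ℤ_p`,
and `μ` is an additive Haar measure on `ℚ_p`. -/
theorem stmt_6 (p : ℕ) [Fact p.Prime] [MeasurableSpace ℚ_[p]] [BorelSpace ℚ_[p]]
    (μ : Measure ℚ_[p]) [μ.IsAddHaarMeasure]
    (χ : ℚ_[p] → ℂ) (hχcont : Continuous χ)
    (hχadd : ∀ x y : ℚ_[p], χ (x + y) = χ x * χ y) (hχzero : χ 0 = 1)
    (hχker : ∀ x : ℚ_[p], χ x = 1 ↔ ‖x‖ ≤ 1)
    (n : ℤ) (f : ℚ_[p] → ℂ) (hf : Integrable f μ)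
    (hlc : ∀ x a : ℚ_[p], ‖a‖ ≤ (p : ℝ) ^ (-n) → f (x + a) = f x) :
    ∀ y : ℚ_[p], (p : ℝ) ^ n < ‖y‖ → ∫ x, χ (-(x * y)) * f x ∂μ = 0 := by
  intro y hy
  set a : ℚ_[p] := (p : ℚ_[p]) ^ n with ha
  have hpapos : (0:ℝ) < (p : ℝ) ^ n := by
    apply zpow_pos
    exact_mod_cast (Fact.out : p.Prime).pos
  have hna : ‖a‖ = (p : ℝ) ^ (-n) := Padic.norm_p_zpow n
  have hay : 1 < ‖a * y‖ := by
    rw [norm_mul, hna]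
    have : (p:ℝ) ^ (-n) * (p:ℝ) ^ n = 1 := by
      rw [← zpow_add₀ (by exact_mod_cast (Fact.out : p.Prime).ne_zero)]
      simp
    calc (1:ℝ) = (p:ℝ) ^ (-n) * (p:ℝ) ^ n := this.symm
    _ < (p:ℝ) ^ (-n) * ‖y‖ := by
        apply mul_lt_mul_of_pos_left hy
        apply zpow_pos
        exact_mod_cast (Fact.out : p.Prime).pos
  have hχne : χ (-(a * y)) ≠ 1 := by
    intro h
    have h2 : χ (a * y) = 1 := by
      have h3 := hχadd (a*y) (-(a*y))
      rw [add_neg_cancel, hχzero, h, mul_one] at h3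
      exact h3.symm
    exact absurd ((hχker _).mp h2) (not_le.mpr hay)
  have key : ∫ x, χ (-(x * y)) * f x ∂μ =
      χ (-(a * y)) * ∫ x, χ (-(x * y)) * f x ∂μ := by
    conv_lhs => rw [← integral_add_right_eq_self (fun x => χ (-(x * y)) * f x) a]
    rw [← integral_const_mul]
    congr 1 with x
    rw [hlc x a (le_of_eq hna), add_mul, neg_add, hχadd, mul_comm (χ _) (χ _)]
    ring
  have : (1 - χ (-(a * y))) * ∫ x, χ (-(x * y)) * f x ∂μ = 0 := by
    rw [sub_mul, one_mul, ← key, sub_self]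
  rcases mul_eq_zero.mp this with h | h
  · exact absurd (by linear_combination -h : χ (-(a*y)) = 1) hχne
  · exact h
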